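/- Fix N ≥ 1 and J ≥ 1, real coefficients c_{n,m} and ε_{n,m} ∈ [0,1] for n, m ∈ {1,…,N}, and a deterministic vector w_0 ∈ ℝ^N. On a probability space, let (e_{n,m,j})_{n,m∈{1,…,N}, j∈{1,…,J}} be integrable real random variables with E[e_{n,m,j}] = 1 − ε_{n,m}, such that for each j the σ-algebra generated by {e_{n,m,j} : n,m} is independent of the σ-algebra generated by {e_{n,m,j'} : n,m, j' < j}. Define random variables w_{n,0} = (w_0)_n and, for j = 1,…,J, w_{n,j} = Σ_{m=1}^N c_{n,m} e_{n,m,j} w_{m,j−1}. Let C = (c_{n,m}) and T = (1 − ε_{n,m}) as N×N matrices, and let J_N be the N×N matrix with every entry 1/N. Then E[w_{n,J}] = ((C∘T)^J w_0)_n for every n, and consequently the expected bias satisfies E[(1/N)Σ_m (w_0)_m − w_{n,J}] = ((J_N − (C∘T)^J) w_0)_n. -/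

import Mathlib

open MeasureTheory ProbabilityTheory Matrix

/-- Lemma 2 of the paper (one model coordinate): with imperfect local aggregations
`w_{n,j} = Σ_m c_{n,m} e_{n,m,j} w_{m,j−1}`, where the packet-reception variables
`e_{n,m,j}` have mean `1 − ε_{n,m}` and, for each `j`, are independent of the past,
the expectation of the aggregated model is `E[w_{n,J}] = ((C∘T)^J w₀)_n` and the
expected bias from the ideal average is `((J_N − (C∘T)^J) w₀)_n`. -/
theorem expected_bias_imperfect_aggregation
    {N J : ℕ} (hN : 1 ≤ N) (hJ : 1 ≤ J)
    (c ε : Fin N → Fin N → ℝ) (hε : ∀ n m, ε n m ∈ Set.Icc (0 : ℝ) 1)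
    (w0 : Fin N → ℝ)
    {Ω : Type*} [MeasurableSpace Ω] (μ : Measure Ω) [IsProbabilityMeasure μ]
    (e : Fin N → Fin N → ℕ → Ω → ℝ)
    (hint : ∀ n m j, 1 ≤ j → j ≤ J → Integrable (e n m j) μ)
    (hmean : ∀ n m j, 1 ≤ j → j ≤ J → (∫ ω, e n m j ω ∂μ) = 1 - ε n m)
    (hindep : ∀ j, 1 ≤ j → j ≤ J →
      Indep
        (⨆ n, ⨆ m, MeasurableSpace.comap (e n m j) (inferInstance : MeasurableSpace ℝ))
        (⨆ n, ⨆ m, ⨆ (j' : ℕ) (_ : j' < j),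
          MeasurableSpace.comap (e n m j') (inferInstance : MeasurableSpace ℝ)) μ)
    (w : ℕ → Fin N → Ω → ℝ)
    (hw0 : ∀ n ω', w 0 n ω' = w0 n)
    (hwrec : ∀ j, 1 ≤ j → j ≤ J → ∀ n ω',
      w j n ω' = ∑ m, c n m * e n m j ω' * w (j - 1) m ω') :
    ∀ n,
      (∫ ω', w J n ω' ∂μ) =
        (((Matrix.hadamard (Matrix.of c) (Matrix.of fun n' m' => 1 - ε n' m')) ^ J).mulVec
          w0) n ∧
      (∫ ω', ((1 / (N : ℝ)) * ∑ m, w0 m - w J n ω') ∂μ) =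
        (((Matrix.of fun _ _ => (1 : ℝ) / N) -
          (Matrix.hadamard (Matrix.of c) (Matrix.of fun n' m' => 1 - ε n' m')) ^ J).mulVec
            w0) n := by
  intro n
  set A : Matrix (Fin N) (Fin N) ℝ :=
    Matrix.hadamard (Matrix.of c) (Matrix.of fun n' m' => 1 - ε n' m') with hA
  set G : ℕ → MeasurableSpace Ω := fun j =>
    ⨆ n, ⨆ m, ⨆ (j' : ℕ) (_ : j' < j),
      MeasurableSpace.comap (e n m j') (inferInstance : MeasurableSpace ℝ) with hG
  have hGmono : ∀ {j k : ℕ}, j ≤ k → G j ≤ G k := by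
    intro j k hjk
    refine iSup_mono fun n => iSup_mono fun m => iSup_mono fun j' => ?_
    exact iSup_const_mono fun h => lt_of_lt_of_le h hjk
  have key : ∀ j, j ≤ J →
      (∀ n, Measurable[G (j+1)] (w j n)) ∧ (∀ n, Integrable (w j n) μ) ∧
      (∀ n, (∫ ω', w j n ω' ∂μ) = ((A ^ j).mulVec w0) n) := by
    intro j
    induction j with
    | zero =>
      intro _
      refine ⟨fun n => ?_, fun n => ?_, fun n => ?_⟩
      · have : w 0 n = fun _ => w0 n := funext (hw0 n)
        rw [this]; exact measurable_const
      · have : w 0 n = fun _ => w0 n := funext (hw0 n)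
        rw [this]; exact integrable_const _
      · simp only [funext (hw0 n)]
        rw [pow_zero, Matrix.one_mulVec]
        simp
    | succ j ih =>
      intro hjJ
      have hj1 : 1 ≤ j + 1 := Nat.succ_le_succ (Nat.zero_le _)
      obtain ⟨ihMeas, ihInt, ihVal⟩ := ih (Nat.le_of_succ_le hjJ)
      have hrec : ∀ n', w (j+1) n' = fun ω' => ∑ m, c n' m * e n' m (j+1) ω' * w j m ω' := by
        intro n'
        funext ω'
        simpa using hwrec (j+1) hj1 hjJ n' ω'
      -- measurability of e n m (j+1) w.r.t. G (j+2)
      have heMeas : ∀ n' m, Measurable[G (j+2)] (e n' m (j+1)) := by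
        intro n' m
        rw [measurable_iff_comap_le]
        refine le_trans ?_ (le_iSup _ n')
        refine le_trans ?_ (le_iSup _ m)
        refine le_trans ?_ (le_iSup _ (j+1))
        exact le_iSup (fun _ : j + 1 < j + 2 =>
          MeasurableSpace.comap (e n' m (j+1)) (inferInstance : MeasurableSpace ℝ))
          (Nat.lt_succ_self _)
      have hwMeas2 : ∀ m, Measurable[G (j+2)] (w j m) := fun m =>
        (ihMeas m).mono (hGmono (Nat.le_succ _)) le_rfl
      -- independence
      have hIF : ∀ n' m m', IndepFun (e n' m (j+1)) (w j m') μ := by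
        intro n' m m'
        have h1 : MeasurableSpace.comap (e n' m (j+1)) (inferInstance : MeasurableSpace ℝ) ≤
            ⨆ n, ⨆ m, MeasurableSpace.comap (e n m (j+1)) (inferInstance : MeasurableSpace ℝ) :=
          le_trans (le_iSup (fun m => MeasurableSpace.comap (e n' m (j+1))
            (inferInstance : MeasurableSpace ℝ)) m)
            (le_iSup (fun n => ⨆ m, MeasurableSpace.comap (e n m (j+1))
              (inferInstance : MeasurableSpace ℝ)) n')
        have h2 : MeasurableSpace.comap (w j m') (inferInstance : MeasurableSpace ℝ) ≤
            G (j+1) := measurable_iff_comap_le.mp (ihMeas m')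
        exact indep_of_indep_of_le_right (indep_of_indep_of_le_left (hindep (j+1) hj1 hjJ) h1) h2
      have heInt : ∀ n' m, Integrable (e n' m (j+1)) μ := fun n' m => hint n' m (j+1) hj1 hjJ
      have hprodInt : ∀ n' m, Integrable (fun ω' => e n' m (j+1) ω' * w j m ω') μ := by
        intro n' m
        exact (hIF n' m m).integrable_mul (heInt n' m) (ihInt m)
      have htermInt : ∀ n' m,
          Integrable (fun ω' => c n' m * e n' m (j+1) ω' * w j m ω') μ := by
        intro n' m
        have := (hprodInt n' m).const_mul (c n' m)
        simpa [mul_assoc] using this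
      refine ⟨fun n' => ?_, fun n' => ?_, fun n' => ?_⟩
      · rw [hrec n']
        refine Finset.measurable_sum _ fun m _ => ?_
        exact (measurable_const.mul (heMeas n' m)).mul (hwMeas2 m)
      · rw [hrec n']
        exact integrable_finset_sum _ fun m _ => htermInt n' m
      · rw [hrec n']
        rw [integral_finset_sum _ fun m _ => htermInt n' m]
        have hterm : ∀ m, (∫ ω', c n' m * e n' m (j+1) ω' * w j m ω' ∂μ)
            = A n' m * ((A ^ j).mulVec w0) m := by
          intro m
          have h1 : (∫ ω', c n' m * e n' m (j+1) ω' * w j m ω' ∂μ)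
              = c n' m * ∫ ω', e n' m (j+1) ω' * w j m ω' ∂μ := by
            rw [show (fun ω' => c n' m * e n' m (j+1) ω' * w j m ω')
              = fun ω' => c n' m • (e n' m (j+1) ω' * w j m ω') from
                funext fun _ => by simp [smul_eq_mul]; ring, integral_smul, smul_eq_mul]
          have h2 : (∫ ω', e n' m (j+1) ω' * w j m ω' ∂μ)
              = (∫ ω', e n' m (j+1) ω' ∂μ) * ∫ ω', w j m ω' ∂μ :=
            (hIF n' m m).integral_fun_mul_eq_mul_integral (heInt n' m).aestronglyMeasurable
              (ihInt m).aestronglyMeasurable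
          rw [h1, h2, hmean n' m (j+1) hj1 hjJ, ihVal m]
          simp [hA, Matrix.hadamard]
          ring
        rw [Finset.sum_congr rfl fun m _ => hterm m]
        rw [pow_succ', ← Matrix.mulVec_mulVec]
        rfl
  obtain ⟨_, hInt, hVal⟩ := key J le_rfl
  refine ⟨hVal n, ?_⟩
  rw [integral_sub (integrable_const _) (hInt n), integral_const, probReal_univ,
    smul_eq_mul, one_mul, hVal n, Matrix.sub_mulVec]
  have : (Matrix.of fun _ _ => (1 : ℝ) / N).mulVec w0 n = 1 / (N : ℝ) * ∑ m, w0 m := by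
    simp [Matrix.mulVec, dotProduct, Finset.mul_sum]
  rw [Pi.sub_apply, this]
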